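/- Let (X, d) be a metric space and S : ℝ≥0 → X → X a semigroup: S(0) = id and S(t + s) = S(t) ∘ S(s) for all t, s ≥ 0. Assume: (i) for each t ≥ 0, S(t) : X → X is continuous; (ii) there exists t₀ > 0 such that for every bounded set B ⊆ X, the image S(t₀)(B) has compact closure; (iii) there are sets B₀ ⊆ U ⊆ X with B₀ bounded and nonempty, U open, and B₀ absorbing in U: for every bounded B ⊆ U there exists T(B) > 0 with S(t)(B) ⊆ B₀ for all t > T(B). Define A = ω(B₀) = ⋂_{s ≥ 0} closure(⋃_{t ≥ s} S(t)(B₀)). Then A is nonempty and compact, and A attracts all bounded subsets of U: for every bounded B ⊆ U, sup_{x ∈ B} dist(S(t)(x), A) → 0 as t → ∞. -/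

import Mathlib

open Set

/-- The ω-limit set of a set `B` under a semigroup `S` of (time-indexed) maps:
`ω(B) = ⋂_{s ≥ 0} closure (⋃_{t ≥ s} S t '' B)`. -/
def omegaLimitSet {X : Type*} [TopologicalSpace X] (S : ℝ → X → X) (B : Set X) : Set X :=
  ⋂ s ∈ Set.Ici (0 : ℝ), closure (⋃ t ∈ Set.Ici s, S t '' B)

/-- Existence and attraction part of the abstract global attractor theorem (Temam):
under continuity of the semigroup, compactness of `S t₀` for some `t₀ > 0`, and existence of a
bounded absorbing set `B₀` in an open set `U`, the ω-limit set `A = ω(B₀)` is nonempty, compact,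
and attracts all bounded subsets of `U`. -/
theorem global_attractor_exists_and_attracts {X : Type*} [MetricSpace X]
    (S : ℝ → X → X)
    (hS0 : S 0 = id)
    (hSadd : ∀ t s : ℝ, 0 ≤ t → 0 ≤ s → S (t + s) = S t ∘ S s)
    (hcont : ∀ t : ℝ, 0 ≤ t → Continuous (S t))
    (hcpt : ∃ t₀ : ℝ, 0 < t₀ ∧
      ∀ B : Set X, Bornology.IsBounded B → IsCompact (closure (S t₀ '' B)))
    (B₀ U : Set X) (hB₀U : B₀ ⊆ U) (hUopen : IsOpen U)
    (hB₀bdd : Bornology.IsBounded B₀) (hB₀ne : B₀.Nonempty)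
    (habs : ∀ B : Set X, B ⊆ U → Bornology.IsBounded B →
      ∃ T : ℝ, 0 < T ∧ ∀ t : ℝ, T < t → S t '' B ⊆ B₀) :
    (omegaLimitSet S B₀).Nonempty ∧ IsCompact (omegaLimitSet S B₀) ∧
      ∀ B : Set X, B ⊆ U → Bornology.IsBounded B →
        ∀ ε > (0 : ℝ), ∃ T : ℝ, ∀ t ≥ T, ∀ x ∈ B,
          Metric.infDist (S t x) (omegaLimitSet S B₀) ≤ ε := by
  obtain ⟨t₀, ht₀, hK⟩ := hcpt
  obtain ⟨T₀, hT₀, habs₀⟩ := habs B₀ hB₀U hB₀bdd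
  set C : ℝ → Set X := fun s => closure (⋃ t ∈ Set.Ici s, S t '' B₀) with hCdef
  have hCmono : ∀ {s s' : ℝ}, s ≤ s' → C s' ⊆ C s := by
    intro s s' h
    apply closure_mono
    exact Set.biUnion_subset_biUnion_left (fun t ht => le_trans h ht)
  have hCne : ∀ s : ℝ, (C s).Nonempty := by
    intro s
    obtain ⟨x, hx⟩ := hB₀ne
    exact ⟨S s x, subset_closure (Set.mem_biUnion (le_refl s) ⟨x, hx, rfl⟩)⟩
  set s₁ : ℝ := t₀ + T₀ + 1 with hs₁def
  have hs₁ : (0:ℝ) ≤ s₁ := by positivity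
  have hkey : ∀ t : ℝ, s₁ ≤ t → S t '' B₀ ⊆ S t₀ '' B₀ := by
    intro t ht
    have h2 : 0 ≤ t - t₀ := by simp only [hs₁def] at ht; linarith
    have h1 : S t = S t₀ ∘ S (t - t₀) := by
      have := hSadd t₀ (t - t₀) ht₀.le h2
      rwa [show t₀ + (t - t₀) = t by ring] at this
    rw [h1, Set.image_comp]
    exact Set.image_mono (habs₀ (t - t₀) (by simp only [hs₁def] at ht; linarith))
  set K := closure (S t₀ '' B₀) with hKdef
  have hKc : IsCompact K := hK B₀ hB₀bdd
  have hCsub : ∀ s : ℝ, s₁ ≤ s → C s ⊆ K := by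
    intro s hs
    apply closure_minimal _ isClosed_closure
    refine Set.iUnion₂_subset fun t ht => ?_
    exact (hkey t (le_trans hs ht)).trans subset_closure
  have hCcpt : ∀ s : ℝ, s₁ ≤ s → IsCompact (C s) :=
    fun s hs => hKc.of_isClosed_subset isClosed_closure (hCsub s hs)
  have hA : omegaLimitSet S B₀ = ⋂ s ∈ Set.Ici s₁, C s := by
    apply Set.Subset.antisymm
    · exact Set.biInter_subset_biInter_left fun s hs => le_trans hs₁ hs
    · intro x hx
      simp only [omegaLimitSet, Set.mem_iInter] at *
      intro s hs
      exact hCmono (le_max_left s s₁) (hx (max s s₁) (le_trans (le_max_right s s₁) (le_refl _)))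
  have hAiInter : omegaLimitSet S B₀ = ⋂ i : Set.Ici s₁, C i := by
    rw [hA]; exact (Set.iInter_subtype _ _).symm ▸ rfl
  have hAne : (omegaLimitSet S B₀).Nonempty := by
    rw [hAiInter]
    haveI : Nonempty (Set.Ici s₁) := ⟨⟨s₁, Set.self_mem_Ici⟩⟩
    apply IsCompact.nonempty_iInter_of_directed_nonempty_isCompact_isClosed
    · intro i j
      refine ⟨⟨max i j, Set.mem_Ici.mpr (le_trans (Set.mem_Ici.mp i.2) (le_max_left _ _))⟩, ?_, ?_⟩
      · exact hCmono (le_max_left _ _)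
      · exact hCmono (le_max_right _ _)
    · exact fun i => hCne i
    · exact fun i => hCcpt i i.2
    · exact fun i => isClosed_closure
  have hAcpt : IsCompact (omegaLimitSet S B₀) := by
    have hsub : omegaLimitSet S B₀ ⊆ C s₁ := by
      rw [hA]; exact Set.biInter_subset_of_mem (le_refl s₁)
    have hclosed : IsClosed (omegaLimitSet S B₀) := by
      unfold omegaLimitSet
      exact isClosed_biInter fun s hs => isClosed_closure
    exact (hCcpt s₁ (le_refl _)).of_isClosed_subset hclosed hsub
  refine ⟨hAne, hAcpt, ?_⟩
  intro B hBU hBbdd ε hε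
  -- find s* with C s* ⊆ thickening ε A
  have hthick : ∃ s : ℝ, s₁ ≤ s ∧ C s ⊆ Metric.thickening ε (omegaLimitSet S B₀) := by
    by_contra h
    push_neg at h
    haveI : Nonempty (Set.Ici s₁) := ⟨⟨s₁, Set.self_mem_Ici⟩⟩
    have hne : (⋂ i : Set.Ici s₁, (C i \ Metric.thickening ε (omegaLimitSet S B₀))).Nonempty := by
      apply IsCompact.nonempty_iInter_of_directed_nonempty_isCompact_isClosed
      · intro i j
        refine ⟨⟨max i j, Set.mem_Ici.mpr (le_trans (Set.mem_Ici.mp i.2) (le_max_left _ _))⟩, ?_, ?_⟩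
        · exact Set.diff_subset_diff_left (hCmono (le_max_left _ _))
        · exact Set.diff_subset_diff_left (hCmono (le_max_right _ _))
      · intro i
        rcases Set.not_subset.mp (h i i.2) with ⟨x, hx1, hx2⟩
        exact ⟨x, hx1, hx2⟩
      · intro i
        exact (hCcpt i i.2).of_isClosed_subset
          (isClosed_closure.sdiff Metric.isOpen_thickening) Set.diff_subset
      · exact fun i => isClosed_closure.sdiff Metric.isOpen_thickening
    obtain ⟨x, hx⟩ := hne
    simp only [Set.mem_iInter, Set.mem_diff] at hx
    have hxA : x ∈ omegaLimitSet S B₀ := by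
      rw [hAiInter]
      simp only [Set.mem_iInter]
      exact fun i => (hx i).1
    exact (hx ⟨s₁, Set.self_mem_Ici⟩).2 (Metric.self_subset_thickening hε _ hxA)
  obtain ⟨s, hs₁s, hsV⟩ := hthick
  obtain ⟨TB, hTB, habsB⟩ := habs B hBU hBbdd
  refine ⟨TB + 1 + s, fun t ht x hx => ?_⟩
  have hr : (0:ℝ) ≤ TB + 1 := by linarith
  have htr : s ≤ t - (TB + 1) := by linarith
  have h0tr : 0 ≤ t - (TB + 1) := le_trans (le_trans hs₁ hs₁s) htr
  have hsplit : S t = S (t - (TB + 1)) ∘ S (TB + 1) := by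
    have := hSadd (t - (TB + 1)) (TB + 1) h0tr hr
    rwa [show t - (TB + 1) + (TB + 1) = t by ring] at this
  have hmem : S t x ∈ C s := by
    have hx0 : S (TB + 1) x ∈ B₀ := habsB (TB + 1) (by linarith) ⟨x, hx, rfl⟩
    have : S t x ∈ S (t - (TB + 1)) '' B₀ := by
      rw [hsplit]; exact ⟨S (TB + 1) x, hx0, rfl⟩
    exact subset_closure (Set.mem_biUnion htr this)
  have := hsV hmem
  rw [Metric.mem_thickening_iff_infDist_lt hAne] at this
  exact this.le
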